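/- Let n ∈ ℤ_{−ε} with n < 0, and set k = −n > 0. Then in the module π(ε,n), the subspace W = span{v_j : j ∈ ℤ_ε, |j| ≤ k−1} is a submodule of dimension k, it is the unique nonzero irreducible submodule of π(ε,n), and the quotient module V_ε/W is completely reducible: it is the direct sum of the two irreducible submodules given by the images of span{v_j : j ≥ k+1} and span{v_j : j ≤ −(k+1)}. -/

import Mathlib

namespace SL2Deform

/-- The index set `ℤ_ε = {j : ℤ | (-1)^j = ε}`, for a sign `ε ∈ {1, -1}`
(i.e. a unit of `ℤ`). -/
abbrev idx (ε : ℤˣ) : Type := {j : ℤ // (-1 : ℤˣ) ^ j = ε}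

/-- `V ε`: the complex vector space of finitely supported functions on `ℤ_ε`,
with standard basis `{v_j}`. -/
abbrev V (ε : ℤˣ) : Type := idx ε →₀ ℂ

/-- The standard basis vector `v_j` of `V ε`, for `j ∈ ℤ_ε`. -/
noncomputable def bv (ε : ℤˣ) (j : ℤ) (h : (-1 : ℤˣ) ^ j = ε) : V ε :=
  Finsupp.single ⟨j, h⟩ 1

lemma parity_two : (-1 : ℤˣ) ^ (2 : ℤ) = 1 := by decide
lemma parity_neg_two : (-1 : ℤˣ) ^ (-2 : ℤ) = 1 := by decide
lemma parity_zero : (-1 : ℤˣ) ^ (0 : ℤ) = 1 := by decide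

lemma parity_shift {ε : ℤˣ} {j : ℤ} (h : (-1 : ℤˣ) ^ j = ε) {s : ℤ}
    (hs : (-1 : ℤˣ) ^ s = 1) : (-1 : ℤˣ) ^ (j + s) = ε := by
  rw [zpow_add, h, hs, mul_one]

/-- If `m ∈ ℤ_{-ε}` then `m + 1 ∈ ℤ_ε`. -/
lemma parity_succ {ε : ℤˣ} {m : ℤ} (h : (-1 : ℤˣ) ^ m = -ε) :
    (-1 : ℤˣ) ^ (m + 1) = ε := by
  rw [zpow_add, h, zpow_one]
  simp

/-- If `m ∈ ℤ_{-ε}` then `m - 1 ∈ ℤ_ε`. -/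
lemma parity_pred {ε : ℤˣ} {m : ℤ} (h : (-1 : ℤˣ) ^ m = -ε) :
    (-1 : ℤˣ) ^ (m - 1) = ε := by
  rw [sub_eq_add_neg, zpow_add, h, zpow_neg, zpow_one]
  simp

/-- The linear operator on `V ε` sending `v_j` to `c j • v_{j+s}`,
for an even shift `s`. -/
noncomputable def shiftOp (ε : ℤˣ) (s : ℤ) (hs : (-1 : ℤˣ) ^ s = 1) (c : ℤ → ℂ) :
    V ε →ₗ[ℂ] V ε :=
  Finsupp.lsum ℂ fun j =>
    LinearMap.toSpanSingleton ℂ (V ε)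
      (Finsupp.single ⟨j.1 + s, parity_shift j.2 hs⟩ (c j.1))

/-- `H v_j = j • v_j`. -/
noncomputable def Hop (ε : ℤˣ) : V ε →ₗ[ℂ] V ε :=
  shiftOp ε 0 parity_zero fun j => (j : ℂ)

/-- Principal series: `E v_j = ½(ν + j + 1) • v_{j+2}`. -/
noncomputable def Eop (ε : ℤˣ) (ν : ℂ) : V ε →ₗ[ℂ] V ε :=
  shiftOp ε 2 parity_two fun j => (1 / 2 : ℂ) * (ν + j + 1)

/-- Principal series: `F v_j = ½(ν - j + 1) • v_{j-2}`. -/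
noncomputable def Fop (ε : ℤˣ) (ν : ℂ) : V ε →ₗ[ℂ] V ε :=
  shiftOp ε (-2) parity_neg_two fun j => (1 / 2 : ℂ) * (ν - j + 1)

/-- `f_m(ν) = ½ |ν²-m²|^{1/2} (ν+m)/|ν+m|` for `ν ≠ -m`, and `f_m(-m) = 0`. -/
noncomputable def fm (m : ℤ) (ν : ℂ) : ℂ :=
  if ν = -(m : ℂ) then 0
  else (1 / 2 : ℂ) * (Real.sqrt (‖ν ^ 2 - (m : ℂ) ^ 2‖) : ℝ) * (ν + m) /
    (‖ν + (m : ℂ)‖ : ℝ)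

/-- Deformed module: `E v_{m-1} = f_m(ν) • v_{m+1}`, i.e. `E v_j = f_{j+1}(ν) • v_{j+2}`. -/
noncomputable def PEop (ε : ℤˣ) (ν : ℂ) : V ε →ₗ[ℂ] V ε :=
  shiftOp ε 2 parity_two fun j => fm (j + 1) ν

/-- Deformed module: `F v_{m+1} = f_{-m}(ν) • v_{m-1}`, i.e. `F v_j = f_{-(j-1)}(ν) • v_{j-2}`. -/
noncomputable def PFop (ε : ℤˣ) (ν : ℂ) : V ε →ₗ[ℂ] V ε :=
  shiftOp ε (-2) parity_neg_two fun j => fm (1 - j) ν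

/-- The module `π'(ε,ν)`: `E v_{m-1} = ½(ν - |m|) • v_{m+1}`,
i.e. `E v_j = ½(ν - |j+1|) • v_{j+2}`. -/
noncomputable def E'op (ε : ℤˣ) (ν : ℂ) : V ε →ₗ[ℂ] V ε :=
  shiftOp ε 2 parity_two fun j => (1 / 2 : ℂ) * (ν - ((|j + 1| : ℤ) : ℂ))

/-- The module `π'(ε,ν)`: `F v_{m+1} = ½(ν + |m|) • v_{m-1}`,
i.e. `F v_j = ½(ν + |j-1|) • v_{j-2}`. -/
noncomputable def F'op (ε : ℤˣ) (ν : ℂ) : V ε →ₗ[ℂ] V ε :=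
  shiftOp ε (-2) parity_neg_two fun j => (1 / 2 : ℂ) * (ν + ((|j - 1| : ℤ) : ℂ))

/-- `ν ∈ ℤ_{-ε}`: `ν` is an integer with `(-1)^ν = -ε`. -/
def inZminus (ε : ℤˣ) (ν : ℂ) : Prop :=
  ∃ n : ℤ, ν = (n : ℂ) ∧ (-1 : ℤˣ) ^ n = -ε

section ModuleNotions

variable {M : Type*} [AddCommGroup M] [Module ℂ M]
variable {N : Type*} [AddCommGroup N] [Module ℂ N]

/-- `W` is a submodule for the module with operators `A, B, C`: it is invariant
under all three operators. -/
def Invariant (A B C : M →ₗ[ℂ] M) (W : Submodule ℂ M) : Prop :=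
  (∀ x ∈ W, A x ∈ W) ∧ (∀ x ∈ W, B x ∈ W) ∧ (∀ x ∈ W, C x ∈ W)

/-- The module with operators `A, B, C` is irreducible: its only submodules are
`0` and the whole space. -/
def IsIrreducibleRep (A B C : M →ₗ[ℂ] M) : Prop :=
  ∀ W : Submodule ℂ M, Invariant A B C W → W = ⊥ ∨ W = ⊤

/-- `W` is an irreducible submodule: invariant, nonzero, and with no nonzero
proper invariant subspace. -/
def IsIrreducibleSubmodule (A B C : M →ₗ[ℂ] M) (W : Submodule ℂ M) : Prop :=
  Invariant A B C W ∧ W ≠ ⊥ ∧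
    ∀ U : Submodule ℂ M, Invariant A B C U → U ≤ W → U = ⊥ ∨ U = W

/-- The module with operators `A, B, C` is completely reducible: every invariant
subspace has an invariant complement. -/
def CompletelyReducible (A B C : M →ₗ[ℂ] M) : Prop :=
  ∀ W : Submodule ℂ M, Invariant A B C W →
    ∃ U : Submodule ℂ M, Invariant A B C U ∧ IsCompl W U

/-- The two modules (given by operator triples) are isomorphic. -/
def Intertwined (A B C : M →ₗ[ℂ] M) (A' B' C' : N →ₗ[ℂ] N) : Prop :=
  ∃ e : M ≃ₗ[ℂ] N, (∀ x, e (A x) = A' (e x)) ∧ (∀ x, e (B x) = B' (e x)) ∧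
    (∀ x, e (C x) = C' (e x))

/-- An invariant Hermitian form for the module with operators `A, B, C`
(`A` playing the role of `H`, `B` of `E`, `C` of `F`): a sesquilinear form,
conjugate-symmetric, with `⟨Hv,w⟩ = ⟨v,Hw⟩`, `⟨Ev,w⟩ + ⟨v,Fw⟩ = 0`,
`⟨Fv,w⟩ + ⟨v,Ew⟩ = 0`. -/
structure IsInvHermForm (A B C : M →ₗ[ℂ] M) (Φ : M → M → ℂ) : Prop where
  add_left : ∀ u v w, Φ (u + v) w = Φ u w + Φ v w
  smul_left : ∀ (a : ℂ) (v w : M), Φ (a • v) w = a * Φ v w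
  conj_symm : ∀ v w, Φ w v = (starRingEnd ℂ) (Φ v w)
  inv_A : ∀ v w, Φ (A v) w = Φ v (A w)
  inv_BC : ∀ v w, Φ (B v) w + Φ v (C w) = 0
  inv_CB : ∀ v w, Φ (C v) w + Φ v (B w) = 0

end ModuleNotions

/-- `span{v_j : j ≥ n}`. -/
noncomputable def spanGE (ε : ℤˣ) (n : ℤ) : Submodule ℂ (V ε) :=
  Submodule.span ℂ {x : V ε | ∃ j : idx ε, n ≤ j.1 ∧ x = Finsupp.single j 1}

/-- `span{v_j : j ≤ n}`. -/
noncomputable def spanLE (ε : ℤˣ) (n : ℤ) : Submodule ℂ (V ε) :=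
  Submodule.span ℂ {x : V ε | ∃ j : idx ε, j.1 ≤ n ∧ x = Finsupp.single j 1}

/-- `span{v_j : |j| ≤ n}`. -/
noncomputable def spanAbsLE (ε : ℤˣ) (n : ℤ) : Submodule ℂ (V ε) :=
  Submodule.span ℂ {x : V ε | ∃ j : idx ε, |j.1| ≤ n ∧ x = Finsupp.single j 1}

/-- The diagonal operator `S v_j = c j • v_j`. -/
noncomputable def diagMap (ε : ℤˣ) (c : idx ε → ℂ) : V ε →ₗ[ℂ] V ε :=
  Finsupp.lsum ℂ fun j => LinearMap.toSpanSingleton ℂ (V ε) (Finsupp.single j (c j))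
section Aux

variable {ε : ℤˣ}

lemma neg_one_zpow_two_mul (c : ℤ) : (-1 : ℤˣ) ^ (2 * c) = 1 := by
  rw [zpow_mul, parity_two, one_zpow]

lemma parity_dvd_sub {a b : ℤ} (ha : (-1 : ℤˣ) ^ a = ε) (hb : (-1 : ℤˣ) ^ b = ε) :
    (2 : ℤ) ∣ b - a := by
  have h : (-1 : ℤˣ) ^ (b - a) = 1 := by
    rw [sub_eq_add_neg, zpow_add, zpow_neg, ha, hb]
    simp
  rcases Int.even_or_odd (b - a) with ⟨c, hc⟩ | ⟨c, hc⟩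
  · exact ⟨c, by omega⟩
  · rw [hc, zpow_add, neg_one_zpow_two_mul, one_mul, zpow_one] at h
    exact absurd h (by decide)

lemma parity_neg {a : ℤ} (h : (-1 : ℤˣ) ^ a = ε) : (-1 : ℤˣ) ^ (-a) = ε := by
  rw [zpow_neg, h]
  rcases Int.units_eq_one_or ε with rfl | rfl <;> decide

lemma shiftOp_single (s : ℤ) (hs : (-1 : ℤˣ) ^ s = 1) (c : ℤ → ℂ) (j : idx ε) (a : ℂ) :
    shiftOp ε s hs c (Finsupp.single j a)
      = Finsupp.single ⟨j.1 + s, parity_shift j.2 hs⟩ (a * c j.1) := by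
  rw [shiftOp, Finsupp.lsum_single, LinearMap.toSpanSingleton_apply, Finsupp.smul_single,
    smul_eq_mul]

lemma Hop_apply (x : V ε) (i : idx ε) : Hop ε x i = (i.1 : ℂ) * x i := by
  induction x using Finsupp.induction_linear with
  | zero => simp
  | add f g hf hg => rw [map_add, Finsupp.add_apply, hf, hg, Finsupp.add_apply, mul_add]
  | single j a =>
    rw [Hop, shiftOp_single]
    have hj : (⟨j.1 + 0, parity_shift j.2 parity_zero⟩ : idx ε) = j := Subtype.ext (add_zero _)
    rw [hj]
    rcases eq_or_ne j i with rfl | hne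
    · rw [Finsupp.single_eq_same, Finsupp.single_eq_same, mul_comm]
    · rw [Finsupp.single_eq_of_ne hne.symm, Finsupp.single_eq_of_ne hne.symm, mul_zero]

lemma single_one_mem {U : Submodule ℂ (V ε)} {j : idx ε} {c : ℂ} (hc : c ≠ 0)
    (h : Finsupp.single j c ∈ U) : Finsupp.single j (1 : ℂ) ∈ U := by
  have h2 := U.smul_mem c⁻¹ h
  rwa [Finsupp.smul_single, smul_eq_mul, inv_mul_cancel₀ hc] at h2

end Aux
section Aux2

variable {ε : ℤˣ}

lemma graded {U : Submodule ℂ (V ε)} (hH : ∀ x ∈ U, Hop ε x ∈ U) :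
    ∀ x ∈ U, ∀ j ∈ x.support, Finsupp.single j (x j) ∈ U := by
  suffices h : ∀ N : ℕ, ∀ x ∈ U, x.support.card ≤ N → ∀ j ∈ x.support,
      Finsupp.single j (x j) ∈ U by
    intro x hx j hj; exact h x.support.card x hx le_rfl j hj
  intro N
  induction N with
  | zero =>
    intro x _ hcard j hj
    rw [Nat.le_zero, Finset.card_eq_zero] at hcard
    rw [hcard] at hj
    exact absurd hj (Finset.notMem_empty j)
  | succ N ih =>
    intro x hx hcard j hj
    have hyU : Hop ε x - (j.1 : ℂ) • x ∈ U := U.sub_mem (hH x hx) (U.smul_mem _ hx)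
    set y : V ε := Hop ε x - (j.1 : ℂ) • x with hy
    have hyapp : ∀ i, y i = ((i.1 : ℂ) - (j.1 : ℂ)) * x i := by
      intro i
      rw [hy, Finsupp.sub_apply, Finsupp.smul_apply, Hop_apply, smul_eq_mul, sub_mul]
    have hysupp : y.support ⊆ x.support.erase j := by
      intro i hi
      rw [Finsupp.mem_support_iff] at hi
      rw [Finset.mem_erase, Finsupp.mem_support_iff]
      refine ⟨?_, ?_⟩
      · rintro rfl
        exact hi (by rw [hyapp, sub_self, zero_mul])
      · intro h0
        exact hi (by rw [hyapp, h0, mul_zero])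
    have hstep : ∀ i ∈ x.support, i ≠ j → Finsupp.single i (x i) ∈ U := by
      intro i hi hne
      have hij : ((i.1 : ℂ) - (j.1 : ℂ)) ≠ 0 := by
        intro h0
        apply hne
        have h1 : (i.1 : ℂ) = (j.1 : ℂ) := sub_eq_zero.mp h0
        exact Subtype.ext (by exact_mod_cast h1)
      have hiy : i ∈ y.support := by
        rw [Finsupp.mem_support_iff, hyapp]
        exact mul_ne_zero hij (Finsupp.mem_support_iff.1 hi)
      have hcy : y.support.card ≤ N := by
        have h1 := Finset.card_le_card hysupp
        have h2 := Finset.card_erase_of_mem hj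
        omega
      have h3 := ih y hyU hcy i hiy
      rw [hyapp] at h3
      have h4 := U.smul_mem ((i.1 : ℂ) - (j.1 : ℂ))⁻¹ h3
      rwa [Finsupp.smul_single, smul_eq_mul, ← mul_assoc, inv_mul_cancel₀ hij, one_mul] at h4
    have h5 : ∑ i ∈ x.support, Finsupp.single i (x i) = x := Finsupp.sum_single x
    have h6 : x = Finsupp.single j (x j) + ∑ i ∈ x.support.erase j, Finsupp.single i (x i) :=
      h5.symm.trans (Finset.add_sum_erase x.support (fun i => Finsupp.single i (x i)) hj).symm
    have hxj : Finsupp.single j (x j)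
        = x - ∑ i ∈ x.support.erase j, Finsupp.single i (x i) :=
      eq_sub_of_add_eq h6.symm
    rw [hxj]
    exact U.sub_mem hx (Submodule.sum_mem _ fun i hi =>
      hstep i (Finset.mem_of_mem_erase hi) (Finset.ne_of_mem_erase hi))

/-- The set of indices whose basis vector lies in `U`. -/
def sset (U : Submodule ℂ (V ε)) : Set (idx ε) := {j | Finsupp.single j (1 : ℂ) ∈ U}

lemma eq_supported_sset {U : Submodule ℂ (V ε)} (hH : ∀ x ∈ U, Hop ε x ∈ U) :
    U = Finsupp.supported ℂ ℂ (sset U) := by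
  apply le_antisymm
  · intro x hx
    rw [Finsupp.mem_supported]
    intro j hj
    have hj' : j ∈ x.support := hj
    exact single_one_mem (Finsupp.mem_support_iff.1 hj') (graded hH x hx j hj')
  · intro x hx
    rw [Finsupp.mem_supported] at hx
    rw [← Finsupp.sum_single x]
    apply Submodule.sum_mem
    intro i hi
    have h1 : Finsupp.single i (x i) = (x i) • Finsupp.single i (1 : ℂ) := by
      rw [Finsupp.smul_single, smul_eq_mul, mul_one]
    rw [h1]
    exact U.smul_mem _ (hx hi)

lemma shiftOp_mem_supported {s : ℤ} {hs : (-1 : ℤˣ) ^ s = 1} {c : ℤ → ℂ}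
    {S S' : Set (idx ε)}
    (h : ∀ j ∈ S, c j.1 = 0 ∨ ∀ h', (⟨j.1 + s, h'⟩ : idx ε) ∈ S')
    {x : V ε} (hx : x ∈ Finsupp.supported ℂ ℂ S) :
    shiftOp ε s hs c x ∈ Finsupp.supported ℂ ℂ S' := by
  have hle : Finsupp.supported ℂ ℂ S ≤ (Finsupp.supported ℂ ℂ S').comap (shiftOp ε s hs c) := by
    rw [Finsupp.supported_eq_span_single, Submodule.span_le]
    rintro _ ⟨j, hj, rfl⟩
    simp only [SetLike.mem_coe, Submodule.mem_comap]
    rw [shiftOp_single, one_mul]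
    rcases h j hj with h0 | hmem
    · rw [h0, Finsupp.single_zero]
      exact Submodule.zero_mem _
    · exact Finsupp.single_mem_supported ℂ _ (hmem _)
  exact hle hx

lemma mem_of_single_mem_supported {S : Set (idx ε)} {j : idx ε}
    (h : Finsupp.single j (1 : ℂ) ∈ Finsupp.supported ℂ ℂ S) : j ∈ S := by
  have h1 := (Finsupp.mem_supported ℂ _).mp h
  apply h1
  rw [Finsupp.support_single_ne_zero _ one_ne_zero]
  simp

end Aux2
section Aux3

variable {ε : ℤˣ}

/-- `{j : |j| ≤ m}` as a set of indices. -/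
def MSet (ε : ℤˣ) (m : ℤ) : Set (idx ε) := {j : idx ε | |j.1| ≤ m}

/-- `{j : j > m}` as a set of indices. -/
def TSet (ε : ℤˣ) (m : ℤ) : Set (idx ε) := {j : idx ε | m < j.1}

/-- `{j : j < -m}` as a set of indices. -/
def BSet (ε : ℤˣ) (m : ℤ) : Set (idx ε) := {j : idx ε | j.1 < -m}

lemma spanAbsLE_eq (t : ℤ) : spanAbsLE ε t = Finsupp.supported ℂ ℂ (MSet ε t) := by
  rw [Finsupp.supported_eq_span_single, spanAbsLE]
  congr 1
  ext x
  constructor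
  · rintro ⟨j, hj, rfl⟩; exact ⟨j, hj, rfl⟩
  · rintro ⟨j, hj, rfl⟩; exact ⟨j, hj, rfl⟩

lemma spanGE_eq (t : ℤ) :
    spanGE ε t = Finsupp.supported ℂ ℂ {j : idx ε | t ≤ j.1} := by
  rw [Finsupp.supported_eq_span_single, spanGE]
  congr 1
  ext x
  constructor
  · rintro ⟨j, hj, rfl⟩; exact ⟨j, hj, rfl⟩
  · rintro ⟨j, hj, rfl⟩; exact ⟨j, hj, rfl⟩

lemma spanLE_eq (t : ℤ) :
    spanLE ε t = Finsupp.supported ℂ ℂ {j : idx ε | j.1 ≤ t} := by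
  rw [Finsupp.supported_eq_span_single, spanLE]
  congr 1
  ext x
  constructor
  · rintro ⟨j, hj, rfl⟩; exact ⟨j, hj, rfl⟩
  · rintro ⟨j, hj, rfl⟩; exact ⟨j, hj, rfl⟩

/-- Classification of sets of indices closed under the raising/lowering moves with
walls at `m` (for raising) and `-m` (for lowering). -/
lemma classify {m : ℤ} (hm0 : 0 ≤ m) (hpm : (-1 : ℤˣ) ^ m = ε) (S : Set (idx ε))
    (hup : ∀ j ∈ S, j.1 ≠ m → ∀ h', (⟨j.1 + 2, h'⟩ : idx ε) ∈ S)
    (hdn : ∀ j ∈ S, j.1 ≠ -m → ∀ h', (⟨j.1 - 2, h'⟩ : idx ε) ∈ S) :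
    S = ∅ ∨ S = MSet ε m ∨ S = MSet ε m ∪ TSet ε m ∨ S = MSet ε m ∪ BSet ε m ∨
      S = Set.univ := by
  classical
  set P : ℤ → Prop := fun t => ∃ h : (-1 : ℤˣ) ^ t = ε, (⟨t, h⟩ : idx ε) ∈ S with hP
  have Ppar : ∀ t, P t → (-1 : ℤˣ) ^ t = ε := fun t ht => ht.1
  have climb : ∀ (d : ℕ) (t : ℤ), P t → t + 2 * d ≤ m → P (t + 2 * d) := by
    intro d
    induction d with
    | zero => intro t ht _; simpa using ht
    | succ d ih =>
      intro t ht hle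
      have hle' : t + 2 * (d : ℤ) ≤ m := by push_cast at hle ⊢; omega
      obtain ⟨hp, hmem⟩ := ih t ht (by omega)
      by_cases hEq : t + 2 * (d : ℤ) = m
      · exfalso; push_cast at hle; omega
      · have h2 := hup _ hmem hEq (parity_shift hp parity_two)
        have he : t + 2 * ((d : ℤ) + 1) = t + 2 * d + 2 := by ring
        rw [show ((d + 1 : ℕ) : ℤ) = (d : ℤ) + 1 by push_cast; ring, he]
        exact ⟨_, h2⟩
  have climbFree : ∀ (d : ℕ) (t : ℤ), P t → m < t → P (t + 2 * d) := by
    intro d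
    induction d with
    | zero => intro t ht _; simpa using ht
    | succ d ih =>
      intro t ht hlt
      obtain ⟨hp, hmem⟩ := ih t ht hlt
      have h2 := hup _ hmem (show t + 2 * (d : ℤ) ≠ m by omega) (parity_shift hp parity_two)
      rw [show ((d + 1 : ℕ) : ℤ) = (d : ℤ) + 1 by push_cast; ring,
        show t + 2 * ((d : ℤ) + 1) = t + 2 * d + 2 by ring]
      exact ⟨_, h2⟩
  have descend : ∀ (d : ℕ) (t : ℤ), P t → -m ≤ t - 2 * d → P (t - 2 * d) := by
    intro d
    induction d with
    | zero => intro t ht _; simpa using ht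
    | succ d ih =>
      intro t ht hle
      have hle' : -m ≤ t - 2 * (d : ℤ) := by push_cast at hle ⊢; omega
      obtain ⟨hp, hmem⟩ := ih t ht hle'
      have hEq : t - 2 * (d : ℤ) ≠ -m := by push_cast at hle; omega
      have hpar : (-1 : ℤˣ) ^ (t - 2 * (d : ℤ) - 2) = ε := by
        rw [show t - 2 * (d : ℤ) - 2 = t - 2 * (d : ℤ) + (-2) by ring]
        exact parity_shift hp parity_neg_two
      have h2 := hdn _ hmem hEq hpar
      rw [show ((d + 1 : ℕ) : ℤ) = (d : ℤ) + 1 by push_cast; ring,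
        show t - 2 * ((d : ℤ) + 1) = t - 2 * d - 2 by ring]
      exact ⟨_, h2⟩
  have descendFree : ∀ (d : ℕ) (t : ℤ), P t → t < -m → P (t - 2 * d) := by
    intro d
    induction d with
    | zero => intro t ht _; simpa using ht
    | succ d ih =>
      intro t ht hlt
      obtain ⟨hp, hmem⟩ := ih t ht hlt
      have hpar : (-1 : ℤˣ) ^ (t - 2 * (d : ℤ) - 2) = ε := by
        rw [show t - 2 * (d : ℤ) - 2 = t - 2 * (d : ℤ) + (-2) by ring]
        exact parity_shift hp parity_neg_two
      have h2 := hdn _ hmem (show t - 2 * (d : ℤ) ≠ -m by omega) hpar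
      rw [show ((d + 1 : ℕ) : ℤ) = (d : ℤ) + 1 by push_cast; ring,
        show t - 2 * ((d : ℤ) + 1) = t - 2 * d - 2 by ring]
      exact ⟨_, h2⟩
  have reach_le : ∀ t t' : ℤ, P t → (2 : ℤ) ∣ t' - t → t ≤ t' → t' ≤ m → P t' := by
    intro t t' ht hdvd hle hle'
    have h := climb ((t' - t) / 2).toNat t ht (by omega)
    rwa [show t + 2 * ((((t' - t) / 2).toNat : ℤ)) = t' by omega] at h
  have reach_ge : ∀ t t' : ℤ, P t → (2 : ℤ) ∣ t - t' → t' ≤ t → -m ≤ t' → P t' := by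
    intro t t' ht hdvd hle hle'
    have h := descend ((t - t') / 2).toNat t ht (by omega)
    rwa [show t - 2 * ((((t - t') / 2).toNat : ℤ)) = t' by omega] at h
  have reach_up : ∀ t t' : ℤ, P t → (2 : ℤ) ∣ t' - t → m < t → t ≤ t' → P t' := by
    intro t t' ht hdvd hlt hle
    have h := climbFree ((t' - t) / 2).toNat t ht hlt
    rwa [show t + 2 * ((((t' - t) / 2).toNat : ℤ)) = t' by omega] at h
  have reach_dn : ∀ t t' : ℤ, P t → (2 : ℤ) ∣ t - t' → t < -m → t' ≤ t → P t' := by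
    intro t t' ht hdvd hlt hle
    have h := descendFree ((t - t') / 2).toNat t ht hlt
    rwa [show t - 2 * ((((t - t') / 2).toNat : ℤ)) = t' by omega] at h
  rcases Set.eq_empty_or_nonempty S with hS | ⟨j0, hj0⟩
  · exact Or.inl hS
  right
  have hP0 : P j0.1 := ⟨j0.2, hj0⟩
  have hPm : P m := by
    rcases le_or_gt j0.1 m with h | h
    · exact reach_le j0.1 m hP0 (parity_dvd_sub j0.2 hpm) h le_rfl
    · exact reach_ge j0.1 m hP0 (parity_dvd_sub hpm j0.2) (le_of_lt h) (by omega)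
  have hMsub : MSet ε m ⊆ S := by
    intro j hj
    have habs : |j.1| ≤ m := hj
    rw [abs_le] at habs
    have hPj : P j.1 :=
      reach_ge m j.1 hPm (parity_dvd_sub j.2 hpm) habs.2 habs.1
    obtain ⟨hp, hmem⟩ := hPj
    exact hmem
  have hTcase : (∀ j ∈ S, j.1 ≤ m) ∨ TSet ε m ⊆ S := by
    by_cases hT : ∀ j ∈ S, j.1 ≤ m
    · exact Or.inl hT
    · right
      push_neg at hT
      obtain ⟨j1, hj1S, hj1⟩ := hT
      intro j hj
      have hjT : m < j.1 := hj
      have hPj : P j.1 := by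
        rcases le_or_gt j1.1 j.1 with h | h
        · exact reach_up j1.1 j.1 ⟨j1.2, hj1S⟩ (parity_dvd_sub j1.2 j.2) hj1 h
        · exact reach_ge j1.1 j.1 ⟨j1.2, hj1S⟩ (parity_dvd_sub j.2 j1.2) (le_of_lt h)
            (by omega)
      obtain ⟨hp, hmem⟩ := hPj
      exact hmem
  have hBcase : (∀ j ∈ S, -m ≤ j.1) ∨ BSet ε m ⊆ S := by
    by_cases hB : ∀ j ∈ S, -m ≤ j.1
    · exact Or.inl hB
    · right
      push_neg at hB
      obtain ⟨j1, hj1S, hj1⟩ := hB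
      intro j hj
      have hjB : j.1 < -m := hj
      have hPj : P j.1 := by
        rcases le_or_gt j.1 j1.1 with h | h
        · exact reach_dn j1.1 j.1 ⟨j1.2, hj1S⟩ (parity_dvd_sub j.2 j1.2) hj1 h
        · exact reach_le j1.1 j.1 ⟨j1.2, hj1S⟩ (parity_dvd_sub j1.2 j.2) (le_of_lt h)
            (by omega)
      obtain ⟨hp, hmem⟩ := hPj
      exact hmem
  rcases hTcase with hT | hT <;> rcases hBcase with hB | hB
  · left
    apply Set.Subset.antisymm
    · intro j hj
      have h1 := hT j hj
      have h2 := hB j hj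
      show |j.1| ≤ m
      rw [abs_le]; exact ⟨h2, h1⟩
    · exact hMsub
  · right; right; left
    apply Set.Subset.antisymm
    · intro j hj
      rcases le_or_gt (-m) j.1 with h | h
      · exact Or.inl (show |j.1| ≤ m by rw [abs_le]; exact ⟨h, hT j hj⟩)
      · exact Or.inr (h : j ∈ BSet ε m)
    · exact Set.union_subset hMsub hB
  · right; left
    apply Set.Subset.antisymm
    · intro j hj
      rcases le_or_gt j.1 m with h | h
      · exact Or.inl (show |j.1| ≤ m by rw [abs_le]; exact ⟨hB j hj, h⟩)
      · exact Or.inr (h : j ∈ TSet ε m)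
    · exact Set.union_subset hMsub hT
  · right; right; right
    apply Set.Subset.antisymm
    · exact Set.subset_univ S
    · intro j _
      rcases lt_trichotomy j.1 (-m) with h | h | h
      · exact hB (h : j ∈ BSet ε m)
      · exact hMsub (show |j.1| ≤ m by rw [abs_le]; omega)
      · rcases le_or_gt j.1 m with h2 | h2
        · exact hMsub (show |j.1| ≤ m by rw [abs_le]; omega)
        · exact hT (h2 : j ∈ TSet ε m)

end Aux3
section Aux4

variable {ε : ℤˣ}

lemma ecoef_zero_iff (n t : ℤ) :
    (1 / 2 : ℂ) * ((n : ℂ) + (t : ℂ) + 1) = 0 ↔ n + t + 1 = 0 := by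
  have h2 : (1 / 2 : ℂ) ≠ 0 := by norm_num
  rw [mul_eq_zero, or_iff_right h2,
    show ((n : ℂ) + (t : ℂ) + 1) = ((n + t + 1 : ℤ) : ℂ) by push_cast; ring,
    Int.cast_eq_zero]

lemma fcoef_zero_iff (n t : ℤ) :
    (1 / 2 : ℂ) * ((n : ℂ) - (t : ℂ) + 1) = 0 ↔ n - t + 1 = 0 := by
  have h2 : (1 / 2 : ℂ) ≠ 0 := by norm_num
  rw [mul_eq_zero, or_iff_right h2,
    show ((n : ℂ) - (t : ℂ) + 1) = ((n - t + 1 : ℤ) : ℂ) by push_cast; ring,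
    Int.cast_eq_zero]

lemma hop_mem_supported {S : Set (idx ε)} {x : V ε}
    (hx : x ∈ Finsupp.supported ℂ ℂ S) : Hop ε x ∈ Finsupp.supported ℂ ℂ S := by
  refine shiftOp_mem_supported (fun j hj => Or.inr fun h' => ?_) hx
  have he : (⟨j.1 + 0, h'⟩ : idx ε) = j := Subtype.ext (add_zero _)
  rw [he]; exact hj

lemma eop_mem_supported (n : ℤ) {S S' : Set (idx ε)}
    (h : ∀ j ∈ S, n + j.1 + 1 = 0 ∨ ∀ h', (⟨j.1 + 2, h'⟩ : idx ε) ∈ S')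
    {x : V ε} (hx : x ∈ Finsupp.supported ℂ ℂ S) :
    Eop ε (n : ℂ) x ∈ Finsupp.supported ℂ ℂ S' := by
  refine shiftOp_mem_supported (fun j hj => ?_) hx
  rcases h j hj with h0 | h1
  · exact Or.inl ((ecoef_zero_iff n j.1).mpr h0)
  · exact Or.inr h1

lemma fop_mem_supported (n : ℤ) {S S' : Set (idx ε)}
    (h : ∀ j ∈ S, n - j.1 + 1 = 0 ∨ ∀ h', (⟨j.1 + (-2), h'⟩ : idx ε) ∈ S')
    {x : V ε} (hx : x ∈ Finsupp.supported ℂ ℂ S) :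
    Fop ε (n : ℂ) x ∈ Finsupp.supported ℂ ℂ S' := by
  refine shiftOp_mem_supported (fun j hj => ?_) hx
  rcases h j hj with h0 | h1
  · exact Or.inl ((fcoef_zero_iff n j.1).mpr h0)
  · exact Or.inr h1

/-- Classification of invariant subspaces of `π(ε, n)` for `n < 0`, `n ∈ ℤ_{-ε}`. -/
lemma submodule_classify (n : ℤ) (hn : (-1 : ℤˣ) ^ n = -ε) (hneg : n < 0)
    (U : Submodule ℂ (V ε))
    (hU : Invariant (Hop ε) (Eop ε (n : ℂ)) (Fop ε (n : ℂ)) U) :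
    U = ⊥ ∨ U = Finsupp.supported ℂ ℂ (MSet ε (-n - 1)) ∨
      U = Finsupp.supported ℂ ℂ (MSet ε (-n - 1) ∪ TSet ε (-n - 1)) ∨
      U = Finsupp.supported ℂ ℂ (MSet ε (-n - 1) ∪ BSet ε (-n - 1)) ∨ U = ⊤ := by
  obtain ⟨hH, hE, hF⟩ := hU
  have hpm : (-1 : ℤˣ) ^ (-n - 1) = ε := by
    rw [show -n - 1 = -(n + 1) by ring]
    exact parity_neg (parity_succ hn)
  have hup : ∀ j ∈ sset U, j.1 ≠ -n - 1 → ∀ h', (⟨j.1 + 2, h'⟩ : idx ε) ∈ sset U := by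
    intro j hj hne h'
    have h2 := hE _ hj
    rw [Eop, shiftOp_single, one_mul] at h2
    have hc : (1 / 2 : ℂ) * ((n : ℂ) + (j.1 : ℂ) + 1) ≠ 0 := by
      rw [Ne, ecoef_zero_iff]; omega
    exact single_one_mem hc h2
  have hdn : ∀ j ∈ sset U, j.1 ≠ -(-n - 1) → ∀ h', (⟨j.1 - 2, h'⟩ : idx ε) ∈ sset U := by
    intro j hj hne h'
    have h2 := hF _ hj
    rw [Fop, shiftOp_single, one_mul] at h2
    have hidx : (⟨j.1 + (-2), parity_shift j.2 parity_neg_two⟩ : idx ε)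
        = ⟨j.1 - 2, h'⟩ := Subtype.ext (by ring)
    rw [hidx] at h2
    have hc : (1 / 2 : ℂ) * ((n : ℂ) - (j.1 : ℂ) + 1) ≠ 0 := by
      rw [Ne, fcoef_zero_iff]; omega
    exact single_one_mem hc h2
  have hcl := classify (by omega) hpm (sset U) hup hdn
  have hUeq := eq_supported_sset hH
  rcases hcl with h | h | h | h | h
  · left; rw [hUeq, h, Finsupp.supported_empty]
  · right; left; rw [hUeq, h]
  · right; right; left; rw [hUeq, h]
  · right; right; right; left; rw [hUeq, h]
  · right; right; right; right; rw [hUeq, h, Finsupp.supported_univ]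

end Aux4
section Aux5

variable {ε : ℤˣ}

lemma finrank_MSet (m : ℤ) (hm0 : 0 ≤ m) (hpm : (-1 : ℤˣ) ^ m = ε) :
    Module.finrank ℂ (Finsupp.supported ℂ ℂ (MSet ε m)) = m.toNat + 1 := by
  classical
  have hpar : ∀ i : ℤ, (-1 : ℤˣ) ^ (m - 2 * i) = ε := by
    intro i
    rw [show m - 2 * i = m + (-(2 * i)) by ring, zpow_add, hpm, zpow_neg,
      neg_one_zpow_two_mul, inv_one, mul_one]
  have e : Fin (m.toNat + 1) ≃ (MSet ε m) := by
    refine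
      { toFun := fun i => ⟨⟨m - 2 * (i : ℤ), hpar _⟩, ?_⟩
        invFun := fun j => ⟨((m - j.1.1) / 2).toNat, ?_⟩
        left_inv := ?_
        right_inv := ?_ }
    · show |m - 2 * ((i : ℕ) : ℤ)| ≤ m
      have hi : (i : ℕ) < m.toNat + 1 := i.2
      rw [abs_le]
      omega
    · have hj : |j.1.1| ≤ m := j.2
      rw [abs_le] at hj
      have hd : (2 : ℤ) ∣ m - j.1.1 := by
        obtain ⟨c, hc⟩ := parity_dvd_sub hpm j.1.2
        exact ⟨-c, by omega⟩
      omega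
    · intro i
      apply Fin.ext
      have hi : (i : ℕ) < m.toNat + 1 := i.2
      show (((m - (m - 2 * ((i : ℕ) : ℤ))) / 2).toNat) = (i : ℕ)
      omega
    · intro j
      apply Subtype.ext
      apply Subtype.ext
      have hj : |j.1.1| ≤ m := j.2
      rw [abs_le] at hj
      have hd : (2 : ℤ) ∣ m - j.1.1 := by
        obtain ⟨c, hc⟩ := parity_dvd_sub hpm j.1.2
        exact ⟨-c, by omega⟩
      show m - 2 * ((((m - j.1.1) / 2).toNat : ℕ) : ℤ) = j.1.1
      omega
  haveI : Fintype (MSet ε m) := Fintype.ofEquiv _ e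
  have h1 : Module.finrank ℂ (Finsupp.supported ℂ ℂ (MSet ε m))
      = Module.finrank ℂ ((MSet ε m) →₀ ℂ) :=
    LinearEquiv.finrank_eq (Finsupp.supportedEquivFinsupp _)
  rw [h1, Module.finrank_finsupp_self, ← Fintype.card_fin (m.toNat + 1),
    Fintype.card_congr e.symm]

end Aux5

/-- For `n ∈ ℤ_{-ε}`, `n < 0`, `k = -n`: in `π(ε,n)`,
`W = span{v_j : |j| ≤ k-1}` is a submodule of dimension `k`, the unique nonzero
irreducible submodule; and the quotient `V_ε/W` is completely reducible, being the
direct sum of the two irreducible submodules given by the images of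
`span{v_j : j ≥ k+1}` and `span{v_j : j ≤ -(k+1)}`. -/
theorem principal_series_n_neg_structure (ε : ℤˣ) (n : ℤ)
    (hn : (-1 : ℤˣ) ^ n = -ε) (hneg : n < 0) :
    Invariant (Hop ε) (Eop ε (n : ℂ)) (Fop ε (n : ℂ)) (spanAbsLE ε (-n - 1)) ∧
    (Module.finrank ℂ (spanAbsLE ε (-n - 1)) : ℤ) = -n ∧
    IsIrreducibleSubmodule (Hop ε) (Eop ε (n : ℂ)) (Fop ε (n : ℂ)) (spanAbsLE ε (-n - 1)) ∧
    (∀ U : Submodule ℂ (V ε),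
      IsIrreducibleSubmodule (Hop ε) (Eop ε (n : ℂ)) (Fop ε (n : ℂ)) U →
        U = spanAbsLE ε (-n - 1)) ∧
    ∃ (hH : spanAbsLE ε (-n - 1) ≤ (spanAbsLE ε (-n - 1)).comap (Hop ε))
      (hE : spanAbsLE ε (-n - 1) ≤ (spanAbsLE ε (-n - 1)).comap (Eop ε (n : ℂ)))
      (hF : spanAbsLE ε (-n - 1) ≤ (spanAbsLE ε (-n - 1)).comap (Fop ε (n : ℂ))),
      IsCompl ((spanGE ε (-n + 1)).map (spanAbsLE ε (-n - 1)).mkQ)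
        ((spanLE ε (n - 1)).map (spanAbsLE ε (-n - 1)).mkQ) ∧
      IsIrreducibleSubmodule
        (Submodule.mapQ _ _ (Hop ε) hH)
        (Submodule.mapQ _ _ (Eop ε (n : ℂ)) hE)
        (Submodule.mapQ _ _ (Fop ε (n : ℂ)) hF)
        ((spanGE ε (-n + 1)).map (spanAbsLE ε (-n - 1)).mkQ) ∧
      IsIrreducibleSubmodule
        (Submodule.mapQ _ _ (Hop ε) hH)
        (Submodule.mapQ _ _ (Eop ε (n : ℂ)) hE)
        (Submodule.mapQ _ _ (Fop ε (n : ℂ)) hF)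
        ((spanLE ε (n - 1)).map (spanAbsLE ε (-n - 1)).mkQ) := by
  classical
  set m : ℤ := -n - 1 with hm
  have hm0 : 0 ≤ m := by omega
  have hpm : (-1 : ℤˣ) ^ m = ε := by
    rw [hm, show -n - 1 = -(n + 1) by ring]
    exact parity_neg (parity_succ hn)
  have hpT : (-1 : ℤˣ) ^ (m + 2) = ε := parity_shift hpm parity_two
  have hpB : (-1 : ℤˣ) ^ (-m - 2) = ε := by
    rw [show -m - 2 = -(m + 2) by ring]
    exact parity_neg hpT
  have hparity : ∀ j : idx ε, (2 : ℤ) ∣ j.1 - m := fun j => parity_dvd_sub hpm j.2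
  have hsetT : {j : idx ε | -n + 1 ≤ j.1} = TSet ε m := by
    ext j
    have := hparity j
    simp only [TSet, Set.mem_setOf_eq]
    omega
  have hsetB : {j : idx ε | j.1 ≤ n - 1} = BSet ε m := by
    ext j
    have := hparity j
    simp only [BSet, Set.mem_setOf_eq]
    omega
  rw [spanAbsLE_eq, spanGE_eq, spanLE_eq, hsetT, hsetB]
  set W : Submodule ℂ (V ε) := Finsupp.supported ℂ ℂ (MSet ε m) with hWdef
  set G : Submodule ℂ (V ε) := Finsupp.supported ℂ ℂ (TSet ε m) with hGdef
  set L : Submodule ℂ (V ε) := Finsupp.supported ℂ ℂ (BSet ε m) with hLdef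
  -- invariance of W
  have hWH : ∀ x ∈ W, Hop ε x ∈ W := fun x hx => hop_mem_supported hx
  have hWE : ∀ x ∈ W, Eop ε (n : ℂ) x ∈ W := by
    intro x hx
    refine eop_mem_supported n (fun j hj => ?_) hx
    have hj' : |j.1| ≤ m := hj
    rw [abs_le] at hj'
    have hd := hparity j
    by_cases hc : j.1 = m
    · exact Or.inl (by omega)
    · refine Or.inr fun h' => show |j.1 + 2| ≤ m by rw [abs_le]; omega
  have hWF : ∀ x ∈ W, Fop ε (n : ℂ) x ∈ W := by
    intro x hx
    refine fop_mem_supported n (fun j hj => ?_) hx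
    have hj' : |j.1| ≤ m := hj
    rw [abs_le] at hj'
    have hd := hparity j
    by_cases hc : j.1 = -m
    · exact Or.inl (by omega)
    · refine Or.inr fun h' => show |j.1 + (-2)| ≤ m by rw [abs_le]; omega
  have hWinv : Invariant (Hop ε) (Eop ε (n : ℂ)) (Fop ε (n : ℂ)) W := ⟨hWH, hWE, hWF⟩
  -- W is nonzero
  have hmem_m : Finsupp.single (⟨m, hpm⟩ : idx ε) (1 : ℂ) ∈ W :=
    Finsupp.single_mem_supported ℂ 1 (show |m| ≤ m by rw [abs_le]; omega)
  have hWne : W ≠ ⊥ := by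
    intro h
    rw [h, Submodule.mem_bot] at hmem_m
    exact one_ne_zero (Finsupp.single_eq_zero.mp hmem_m)
  -- minimality of W
  have hWmin : ∀ U : Submodule ℂ (V ε),
      Invariant (Hop ε) (Eop ε (n : ℂ)) (Fop ε (n : ℂ)) U → U ≤ W → U = ⊥ ∨ U = W := by
    intro U hUinv hle
    rcases submodule_classify n hn hneg U hUinv with h | h | h | h | h
    · exact Or.inl h
    · exact Or.inr h
    · exfalso
      have hmem : Finsupp.single (⟨m + 2, hpT⟩ : idx ε) (1 : ℂ) ∈ U := by
        rw [h]
        exact Finsupp.single_mem_supported ℂ 1 (Or.inr (show m < m + 2 by omega))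
      have h2 := mem_of_single_mem_supported (hle hmem)
      have h3 : |m + 2| ≤ m := h2
      rw [abs_le] at h3; omega
    · exfalso
      have hmem : Finsupp.single (⟨-m - 2, hpB⟩ : idx ε) (1 : ℂ) ∈ U := by
        rw [h]
        exact Finsupp.single_mem_supported ℂ 1 (Or.inr (show -m - 2 < -m by omega))
      have h2 := mem_of_single_mem_supported (hle hmem)
      have h3 : |(-m - 2)| ≤ m := h2
      rw [abs_le] at h3; omega
    · exfalso
      have hmem : Finsupp.single (⟨m + 2, hpT⟩ : idx ε) (1 : ℂ) ∈ U := by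
        rw [h]; exact Submodule.mem_top
      have h2 := mem_of_single_mem_supported (hle hmem)
      have h3 : |m + 2| ≤ m := h2
      rw [abs_le] at h3; omega
  refine ⟨hWinv, ?_, ⟨hWinv, hWne, hWmin⟩, ?_, ?_⟩
  -- finrank
  · rw [hWdef, finrank_MSet m hm0 hpm]
    omega
  -- uniqueness
  · intro U hUirr
    obtain ⟨hUinv, hUne, hUmin⟩ := hUirr
    rcases submodule_classify n hn hneg U hUinv with h | h | h | h | h
    · exact absurd h hUne
    · exact h
    · have hWle : W ≤ U := by
        rw [h]; exact Finsupp.supported_mono Set.subset_union_left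
      rcases hUmin W hWinv hWle with h2 | h2
      · exact absurd h2 hWne
      · exact h2.symm
    · have hWle : W ≤ U := by
        rw [h]; exact Finsupp.supported_mono Set.subset_union_left
      rcases hUmin W hWinv hWle with h2 | h2
      · exact absurd h2 hWne
      · exact h2.symm
    · have hWle : W ≤ U := by rw [h]; exact le_top
      rcases hUmin W hWinv hWle with h2 | h2
      · exact absurd h2 hWne
      · exact h2.symm
  -- quotient structure
  · have hWcomapH : W ≤ W.comap (Hop ε) := fun x hx => Submodule.mem_comap.mpr (hWH x hx)
    have hWcomapE : W ≤ W.comap (Eop ε (n : ℂ)) :=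
      fun x hx => Submodule.mem_comap.mpr (hWE x hx)
    have hWcomapF : W ≤ W.comap (Fop ε (n : ℂ)) :=
      fun x hx => Submodule.mem_comap.mpr (hWF x hx)
    have hmapP : Submodule.map W.mkQ W = ⊥ := by
      refine le_antisymm ?_ bot_le
      refine Submodule.map_le_iff_le_comap.mpr ?_
      rw [Submodule.comap_bot, Submodule.ker_mkQ]
    have hmapMT : Submodule.map W.mkQ (Finsupp.supported ℂ ℂ (MSet ε m ∪ TSet ε m))
        = Submodule.map W.mkQ G := by
      rw [Finsupp.supported_union, ← hWdef, ← hGdef, Submodule.map_sup, hmapP, bot_sup_eq]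
    have hmapMB : Submodule.map W.mkQ (Finsupp.supported ℂ ℂ (MSet ε m ∪ BSet ε m))
        = Submodule.map W.mkQ L := by
      rw [Finsupp.supported_union, ← hWdef, ← hLdef, Submodule.map_sup, hmapP, bot_sup_eq]
    -- operators map G and L where needed
    have hGE : ∀ x ∈ G, Eop ε (n : ℂ) x ∈ G := by
      intro x hx
      refine eop_mem_supported n (fun j hj => Or.inr fun h' => ?_) hx
      have hj' : m < j.1 := hj
      show m < j.1 + 2
      omega
    have hGF : ∀ x ∈ G, Fop ε (n : ℂ) x ∈ Finsupp.supported ℂ ℂ (MSet ε m ∪ TSet ε m) := by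
      intro x hx
      refine fop_mem_supported n (fun j hj => Or.inr fun h' => ?_) hx
      have hj' : m < j.1 := hj
      have hd := hparity j
      by_cases h2 : j.1 + (-2) ≤ m
      · exact Or.inl (show |j.1 + (-2)| ≤ m by rw [abs_le]; omega)
      · exact Or.inr (show m < j.1 + (-2) by omega)
    have hLF : ∀ x ∈ L, Fop ε (n : ℂ) x ∈ L := by
      intro x hx
      refine fop_mem_supported n (fun j hj => Or.inr fun h' => ?_) hx
      have hj' : j.1 < -m := hj
      show j.1 + (-2) < -m
      omega
    have hLE : ∀ x ∈ L, Eop ε (n : ℂ) x ∈ Finsupp.supported ℂ ℂ (MSet ε m ∪ BSet ε m) := by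
      intro x hx
      refine eop_mem_supported n (fun j hj => Or.inr fun h' => ?_) hx
      have hj' : j.1 < -m := hj
      have hd := hparity j
      by_cases h2 : -m ≤ j.1 + 2
      · exact Or.inl (show |j.1 + 2| ≤ m by rw [abs_le]; omega)
      · exact Or.inr (show j.1 + 2 < -m by omega)
    refine ⟨hWcomapH, hWcomapE, hWcomapF, ?_, ?_, ?_⟩
    -- IsCompl
    · constructor
      · rw [disjoint_iff, eq_bot_iff]
        rintro x ⟨hxG, hxL⟩
        obtain ⟨g, hg, hgx⟩ := Submodule.mem_map.mp hxG
        obtain ⟨l, hl, hlx⟩ := Submodule.mem_map.mp hxL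
        have hsub : g - l ∈ W := by
          rw [← Submodule.ker_mkQ W, LinearMap.mem_ker, map_sub, hgx, hlx, sub_self]
        have hgmem : g ∈ Finsupp.supported ℂ ℂ (BSet ε m ∪ MSet ε m) := by
          have hgl : g = l + (g - l) := by abel
          rw [hgl, Finsupp.supported_union, ← hLdef, ← hWdef]
          exact Submodule.add_mem _ (Submodule.mem_sup_left hl) (Submodule.mem_sup_right hsub)
        have hsupp1 := (Finsupp.mem_supported ℂ g).mp hg
        have hsupp2 := (Finsupp.mem_supported ℂ g).mp hgmem
        have hg0 : g = 0 := by
          rw [← Finsupp.support_eq_empty]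
          apply Finset.eq_empty_of_forall_notMem
          intro j hj
          have h1 : m < j.1 := hsupp1 hj
          rcases hsupp2 hj with h2 | h2
          · have h3 : j.1 < -m := h2; omega
          · have h3 : |j.1| ≤ m := h2; rw [abs_le] at h3; omega
        rw [Submodule.mem_bot, ← hgx, hg0, map_zero]
      · rw [codisjoint_iff]
        have h1 : G ⊔ L ⊔ W = ⊤ := by
          rw [hGdef, hLdef, hWdef, ← Finsupp.supported_union, ← Finsupp.supported_union]
          rw [show TSet ε m ∪ BSet ε m ∪ MSet ε m = Set.univ from ?_, Finsupp.supported_univ]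
          ext j
          simp only [Set.mem_union, Set.mem_univ, iff_true]
          rcases lt_trichotomy j.1 (-m) with h | h | h
          · exact Or.inl (Or.inr h)
          · exact Or.inr (show |j.1| ≤ m by rw [abs_le]; omega)
          · rcases le_or_gt j.1 m with h2 | h2
            · exact Or.inr (show |j.1| ≤ m by rw [abs_le]; omega)
            · exact Or.inl (Or.inl h2)
        calc Submodule.map W.mkQ G ⊔ Submodule.map W.mkQ L
            = Submodule.map W.mkQ (G ⊔ L) := (Submodule.map_sup _ _ _).symm
          _ = Submodule.map W.mkQ (G ⊔ L) ⊔ Submodule.map W.mkQ W := by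
              rw [hmapP, sup_bot_eq]
          _ = Submodule.map W.mkQ (G ⊔ L ⊔ W) := (Submodule.map_sup _ _ _).symm
          _ = ⊤ := by rw [h1, Submodule.map_top, Submodule.range_mkQ]
    -- irreducibility of the image of G
    · refine ⟨⟨?_, ?_, ?_⟩, ?_, ?_⟩
      · intro x hx
        obtain ⟨g, hg, rfl⟩ := Submodule.mem_map.mp hx
        rw [Submodule.mkQ_apply, Submodule.mapQ_apply]
        exact Submodule.mem_map_of_mem (hop_mem_supported hg)
      · intro x hx
        obtain ⟨g, hg, rfl⟩ := Submodule.mem_map.mp hx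
        rw [Submodule.mkQ_apply, Submodule.mapQ_apply]
        exact Submodule.mem_map_of_mem (hGE g hg)
      · intro x hx
        obtain ⟨g, hg, rfl⟩ := Submodule.mem_map.mp hx
        rw [Submodule.mkQ_apply, Submodule.mapQ_apply]
        have h2 := Submodule.mem_map_of_mem (f := W.mkQ) (hGF g hg)
        rwa [hmapMT] at h2
      · intro hbot
        have hmem : Finsupp.single (⟨m + 2, hpT⟩ : idx ε) (1 : ℂ) ∈ G :=
          Finsupp.single_mem_supported ℂ 1 (show m < m + 2 by omega)
        have h2 : W.mkQ _ ∈ Submodule.map W.mkQ G := Submodule.mem_map_of_mem hmem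
        rw [hbot, Submodule.mem_bot, Submodule.mkQ_apply,
          Submodule.Quotient.mk_eq_zero] at h2
        have h3 := mem_of_single_mem_supported h2
        have h4 : |m + 2| ≤ m := h3
        rw [abs_le] at h4; omega
      · intro U' hU'inv hU'le
        obtain ⟨hq1, hq2, hq3⟩ := hU'inv
        set Ucm := Submodule.comap W.mkQ U' with hUcm
        have hUinv : Invariant (Hop ε) (Eop ε (n : ℂ)) (Fop ε (n : ℂ)) Ucm := by
          refine ⟨?_, ?_, ?_⟩
          · intro x hx
            have hx' : W.mkQ x ∈ U' := hx
            have h4 := hq1 _ hx'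
            refine Submodule.mem_comap.mpr ?_
            have h5 : (Submodule.mapQ W W (Hop ε) hWcomapH) (W.mkQ x) = W.mkQ (Hop ε x) := by
              rw [Submodule.mkQ_apply, Submodule.mapQ_apply, Submodule.mkQ_apply]
            rwa [h5] at h4
          · intro x hx
            have hx' : W.mkQ x ∈ U' := hx
            have h4 := hq2 _ hx'
            refine Submodule.mem_comap.mpr ?_
            have h5 : (Submodule.mapQ W W (Eop ε (n : ℂ)) hWcomapE) (W.mkQ x)
                = W.mkQ (Eop ε (n : ℂ) x) := by
              rw [Submodule.mkQ_apply, Submodule.mapQ_apply, Submodule.mkQ_apply]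
            rwa [h5] at h4
          · intro x hx
            have hx' : W.mkQ x ∈ U' := hx
            have h4 := hq3 _ hx'
            refine Submodule.mem_comap.mpr ?_
            have h5 : (Submodule.mapQ W W (Fop ε (n : ℂ)) hWcomapF) (W.mkQ x)
                = W.mkQ (Fop ε (n : ℂ) x) := by
              rw [Submodule.mkQ_apply, Submodule.mapQ_apply, Submodule.mkQ_apply]
            rwa [h5] at h4
        have hUcmle : Ucm ≤ Finsupp.supported ℂ ℂ (MSet ε m ∪ TSet ε m) := by
          have h6 : Ucm ≤ Submodule.comap W.mkQ (Submodule.map W.mkQ G) :=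
            Submodule.comap_mono hU'le
          rw [Submodule.comap_map_mkQ] at h6
          rwa [show W ⊔ G = Finsupp.supported ℂ ℂ (MSet ε m ∪ TSet ε m) from by
            rw [Finsupp.supported_union, ← hWdef, ← hGdef]] at h6
        have hU'eq : U' = Submodule.map W.mkQ Ucm :=
          (Submodule.map_comap_eq_of_surjective (Submodule.mkQ_surjective W) U').symm
        rcases submodule_classify n hn hneg Ucm hUinv with h | h | h | h | h
        · left; rw [hU'eq, h, Submodule.map_bot]
        · left; rw [hU'eq, h]; exact hmapP
        · right; rw [hU'eq, h]; exact hmapMT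
        · exfalso
          have hmem : Finsupp.single (⟨-m - 2, hpB⟩ : idx ε) (1 : ℂ) ∈ Ucm := by
            rw [h]
            exact Finsupp.single_mem_supported ℂ 1 (Or.inr (show -m - 2 < -m by omega))
          rcases mem_of_single_mem_supported (hUcmle hmem) with h7 | h7
          · have h8 : |(-m - 2)| ≤ m := h7; rw [abs_le] at h8; omega
          · have h8 : m < -m - 2 := h7; omega
        · exfalso
          have hmem : Finsupp.single (⟨-m - 2, hpB⟩ : idx ε) (1 : ℂ) ∈ Ucm := by
            rw [h]; exact Submodule.mem_top
          rcases mem_of_single_mem_supported (hUcmle hmem) with h7 | h7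
          · have h8 : |(-m - 2)| ≤ m := h7; rw [abs_le] at h8; omega
          · have h8 : m < -m - 2 := h7; omega
    -- irreducibility of the image of L
    · refine ⟨⟨?_, ?_, ?_⟩, ?_, ?_⟩
      · intro x hx
        obtain ⟨g, hg, rfl⟩ := Submodule.mem_map.mp hx
        rw [Submodule.mkQ_apply, Submodule.mapQ_apply]
        exact Submodule.mem_map_of_mem (hop_mem_supported hg)
      · intro x hx
        obtain ⟨g, hg, rfl⟩ := Submodule.mem_map.mp hx
        rw [Submodule.mkQ_apply, Submodule.mapQ_apply]
        have h2 := Submodule.mem_map_of_mem (f := W.mkQ) (hLE g hg)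
        rwa [hmapMB] at h2
      · intro x hx
        obtain ⟨g, hg, rfl⟩ := Submodule.mem_map.mp hx
        rw [Submodule.mkQ_apply, Submodule.mapQ_apply]
        exact Submodule.mem_map_of_mem (hLF g hg)
      · intro hbot
        have hmem : Finsupp.single (⟨-m - 2, hpB⟩ : idx ε) (1 : ℂ) ∈ L :=
          Finsupp.single_mem_supported ℂ 1 (show -m - 2 < -m by omega)
        have h2 : W.mkQ _ ∈ Submodule.map W.mkQ L := Submodule.mem_map_of_mem hmem
        rw [hbot, Submodule.mem_bot, Submodule.mkQ_apply,
          Submodule.Quotient.mk_eq_zero] at h2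
        have h3 := mem_of_single_mem_supported h2
        have h4 : |(-m - 2)| ≤ m := h3
        rw [abs_le] at h4; omega
      · intro U' hU'inv hU'le
        obtain ⟨hq1, hq2, hq3⟩ := hU'inv
        set Ucm := Submodule.comap W.mkQ U' with hUcm
        have hUinv : Invariant (Hop ε) (Eop ε (n : ℂ)) (Fop ε (n : ℂ)) Ucm := by
          refine ⟨?_, ?_, ?_⟩
          · intro x hx
            have hx' : W.mkQ x ∈ U' := hx
            have h4 := hq1 _ hx'
            refine Submodule.mem_comap.mpr ?_
            have h5 : (Submodule.mapQ W W (Hop ε) hWcomapH) (W.mkQ x) = W.mkQ (Hop ε x) := by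
              rw [Submodule.mkQ_apply, Submodule.mapQ_apply, Submodule.mkQ_apply]
            rwa [h5] at h4
          · intro x hx
            have hx' : W.mkQ x ∈ U' := hx
            have h4 := hq2 _ hx'
            refine Submodule.mem_comap.mpr ?_
            have h5 : (Submodule.mapQ W W (Eop ε (n : ℂ)) hWcomapE) (W.mkQ x)
                = W.mkQ (Eop ε (n : ℂ) x) := by
              rw [Submodule.mkQ_apply, Submodule.mapQ_apply, Submodule.mkQ_apply]
            rwa [h5] at h4
          · intro x hx
            have hx' : W.mkQ x ∈ U' := hx
            have h4 := hq3 _ hx'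
            refine Submodule.mem_comap.mpr ?_
            have h5 : (Submodule.mapQ W W (Fop ε (n : ℂ)) hWcomapF) (W.mkQ x)
                = W.mkQ (Fop ε (n : ℂ) x) := by
              rw [Submodule.mkQ_apply, Submodule.mapQ_apply, Submodule.mkQ_apply]
            rwa [h5] at h4
        have hUcmle : Ucm ≤ Finsupp.supported ℂ ℂ (MSet ε m ∪ BSet ε m) := by
          have h6 : Ucm ≤ Submodule.comap W.mkQ (Submodule.map W.mkQ L) :=
            Submodule.comap_mono hU'le
          rw [Submodule.comap_map_mkQ] at h6
          rwa [show W ⊔ L = Finsupp.supported ℂ ℂ (MSet ε m ∪ BSet ε m) from by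
            rw [Finsupp.supported_union, ← hWdef, ← hLdef]] at h6
        have hU'eq : U' = Submodule.map W.mkQ Ucm :=
          (Submodule.map_comap_eq_of_surjective (Submodule.mkQ_surjective W) U').symm
        rcases submodule_classify n hn hneg Ucm hUinv with h | h | h | h | h
        · left; rw [hU'eq, h, Submodule.map_bot]
        · left; rw [hU'eq, h]; exact hmapP
        · exfalso
          have hmem : Finsupp.single (⟨m + 2, hpT⟩ : idx ε) (1 : ℂ) ∈ Ucm := by
            rw [h]
            exact Finsupp.single_mem_supported ℂ 1 (Or.inr (show m < m + 2 by omega))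
          rcases mem_of_single_mem_supported (hUcmle hmem) with h7 | h7
          · have h8 : |m + 2| ≤ m := h7; rw [abs_le] at h8; omega
          · have h8 : m + 2 < -m := h7; omega
        · right; rw [hU'eq, h]; exact hmapMB
        · exfalso
          have hmem : Finsupp.single (⟨m + 2, hpT⟩ : idx ε) (1 : ℂ) ∈ Ucm := by
            rw [h]; exact Submodule.mem_top
          rcases mem_of_single_mem_supported (hUcmle hmem) with h7 | h7
          · have h8 : |m + 2| ≤ m := h7; rw [abs_le] at h8; omega
          · have h8 : m + 2 < -m := h7; omega
end SL2Deform
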